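/- Let a, b, c > 0, let x̄ = (b/(2ac))·(c − 2a + √(4a² + c²)), let t̂ ∈ ℝ, and let x : (−∞, t̂] → ℝ be a differentiable function with x(t) > 0 for all t, solving x'(t) = (a c x(t)² + b(2a − c) x(t) − b²)/(c x(t)) with x(t̂) = b/(2a). Then b/(2a) ≤ x(t) < x̄ for all t ≤ t̂, x is strictly decreasing in t (so x increases as t decreases), and x(t) → x̄ as t → −∞. -/

import Mathlib

open Set Filter

set_option maxHeartbeats 2000000 in
/-- The ESS singular arc, i.e. the positive solution of
`x' = (a c x² + b(2a - c) x - b²)/(c x)` on `(-∞, t̂]` with `x(t̂) = b/(2a)`, satisfies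
`b/(2a) ≤ x(t) < x̄` for all `t ≤ t̂`, is strictly decreasing in `t` (so `x` increases as
`t` decreases), and `x(t) → x̄` as `t → -∞`, where
`x̄ = (b/(2ac))(c - 2a + √(4a² + c²))`. -/
theorem ess_singular_arc_asymptotics (a b c that : ℝ)
    (ha : 0 < a) (hb : 0 < b) (hc : 0 < c)
    (xbar : ℝ)
    (hxbar : xbar = (b / (2 * a * c)) * (c - 2 * a + Real.sqrt (4 * a ^ 2 + c ^ 2)))
    (x : ℝ → ℝ)
    (hx_pos : ∀ t ∈ Set.Iic that, 0 < x t)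
    (hx : ∀ t ∈ Set.Iic that,
      HasDerivWithinAt x
        ((a * c * (x t) ^ 2 + b * (2 * a - c) * x t - b ^ 2) / (c * x t))
        (Set.Iic that) t)
    (hxT : x that = b / (2 * a)) :
    (∀ t ≤ that, b / (2 * a) ≤ x t ∧ x t < xbar) ∧
    StrictAntiOn x (Set.Iic that) ∧
    Filter.Tendsto x Filter.atBot (nhds xbar) := by
  have h2a : (0:ℝ) < 2 * a := by linarith
  set s : ℝ := Real.sqrt (4 * a ^ 2 + c ^ 2) with hs_def
  have hs0 : 0 ≤ s := Real.sqrt_nonneg _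
  have hs2 : s ^ 2 = 4 * a ^ 2 + c ^ 2 := Real.sq_sqrt (by positivity)
  have hsc : c < s := by nlinarith
  have hs2a : 2 * a < s := by nlinarith
  -- basic facts about xbar
  have h1 : 2 * a * c * xbar = b * (c - 2 * a + s) := by
    rw [hxbar]; field_simp
  have hxbar_pos : 0 < xbar := by
    have h3 : 0 < 2 * a * c * xbar := by
      rw [h1]; exact mul_pos hb (by linarith)
    nlinarith [mul_pos h2a hc]
  have hlt : b / (2 * a) < xbar := by
    rw [div_lt_iff₀ h2a]
    nlinarith [mul_pos hb (sub_pos.2 hs2a)]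
  have hroot : a * c * xbar ^ 2 + b * (2 * a - c) * xbar - b ^ 2 = 0 := by
    have key : 4 * a ^ 2 * c ^ 2 * (a * c * xbar ^ 2 + b * (2 * a - c) * xbar - b ^ 2) = 0 := by
      linear_combination (a * c * (2 * a * c * xbar + b * (c - 2 * a + s))
        + 2 * a * c * b * (2 * a - c)) * h1 + a * c * b ^ 2 * hs2
    exact (mul_eq_zero.mp key).resolve_left (by positivity)
  have hfac : ∀ y : ℝ, a * c * y ^ 2 + b * (2 * a - c) * y - b ^ 2
      = (y - xbar) * (a * c * (y + xbar) + b * (2 * a - c)) := by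
    intro y; linear_combination hroot
  have hP : ∀ y : ℝ, 0 ≤ y → a * b ≤ a * c * (y + xbar) + b * (2 * a - c) := by
    intro y hy
    nlinarith [mul_nonneg (mul_pos ha hc).le hy, mul_pos hb (sub_pos.2 hsc)]
  have hcont : ContinuousOn x (Set.Iic that) := fun t ht => (hx t ht).continuousWithinAt
  -- numerator is negative when 0 < x t < xbar
  have hN_neg : ∀ y : ℝ, 0 < y → y < xbar →
      a * c * y ^ 2 + b * (2 * a - c) * y - b ^ 2 < 0 := by
    intro y hy0 hy1
    rw [hfac y]
    have := hP y hy0.le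
    exact mul_neg_of_neg_of_pos (by linarith) (by nlinarith [mul_pos ha hb])
  -- Part 1: upper bound
  have hupper : ∀ t ∈ Set.Iic that, x t < xbar := by
    by_contra h
    push_neg at h
    obtain ⟨t₀, ht₀, hge⟩ := h
    have ht₀lt : t₀ < that := by
      rcases lt_or_eq_of_le (mem_Iic.mp ht₀) with h' | rfl
      · exact h'
      · rw [hxT] at hge; linarith
    have hsub : Icc t₀ that ⊆ Iic that := Icc_subset_Iic_self
    have hmem : xbar ∈ Icc (x that) (x t₀) := ⟨by rw [hxT]; exact hlt.le, hge⟩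
    obtain ⟨T, hTmem, hTeq⟩ := intermediate_value_Icc' ht₀lt.le (hcont.mono hsub) hmem
    have hTsub : Icc T that ⊆ Iic that := Icc_subset_Iic_self
    have hTthat : T ≤ that := hTmem.2
    -- the coefficient function k
    set k : ℝ → ℝ := fun t => (a * c * (x t + xbar) + b * (2 * a - c)) / (c * x t) with hk_def
    have hkc : ContinuousOn k (Icc T that) := by
      apply ContinuousOn.div
      · exact (continuousOn_const.mul ((hcont.mono hTsub).add continuousOn_const)).add
          continuousOn_const
      · exact continuousOn_const.mul (hcont.mono hTsub)
      · intro t ht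
        have := hx_pos t (hTsub ht)
        positivity
    obtain ⟨K, hK⟩ := isCompact_Icc.exists_bound_of_continuousOn hkc
    have key := norm_le_gronwallBound_of_norm_deriv_right_le
      (f := fun t => xbar - x t) (f' := fun t => (xbar - x t) * k t) (δ := 0) (K := K) (ε := 0)
      (a := T) (b := that)
      (continuousOn_const.sub (hcont.mono hTsub))
      (by
        intro t ht
        have htt : t < that := ht.2
        have hxd : HasDerivAt x
            ((a * c * (x t) ^ 2 + b * (2 * a - c) * x t - b ^ 2) / (c * x t)) t :=
          (hx t (mem_Iic.mpr htt.le)).hasDerivAt (Iic_mem_nhds htt)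
        have hgd : HasDerivAt (fun t => xbar - x t)
            ((xbar - x t) * k t) t := by
          have := (hasDerivAt_const t xbar).sub hxd
          convert this using 1
          · exact rfl
          · exact rfl
          · exact rfl
          have hxt : (0:ℝ) < x t := hx_pos t (mem_Iic.mpr htt.le)
          rw [hk_def]
          simp only []
          rw [hfac (x t)]
          field_simp
          ring
        exact hgd.hasDerivWithinAt
      )
      (by simp [hTeq])
      (by
        intro t ht
        have ht' : t ∈ Icc T that := ⟨ht.1, ht.2.le⟩
        show ‖(xbar - x t) * k t‖ ≤ K * ‖xbar - x t‖ + 0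
        rw [norm_mul, add_zero, mul_comm (‖xbar - x t‖)]
        exact mul_le_mul_of_nonneg_right (hK t ht') (norm_nonneg _))
    have := key that ⟨hTthat, le_rfl⟩
    rw [gronwallBound_ε0_δ0] at this
    have : xbar - x that = 0 := by
      have h0 : ‖xbar - x that‖ ≤ 0 := this
      simpa using le_antisymm h0 (norm_nonneg _)
    rw [hxT] at this
    linarith
  -- Part 2: strictly decreasing
  have hanti : StrictAntiOn x (Set.Iic that) := by
    apply strictAntiOn_of_deriv_neg (convex_Iic that) hcont
    intro t ht
    rw [interior_Iic] at ht
    have htlt : t < that := mem_Iio.mp ht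
    have hxd : HasDerivAt x
        ((a * c * (x t) ^ 2 + b * (2 * a - c) * x t - b ^ 2) / (c * x t)) t :=
      (hx t (mem_Iic.mpr htlt.le)).hasDerivAt (Iic_mem_nhds htlt)
    rw [hxd.deriv]
    have hxt : 0 < x t := hx_pos t (mem_Iic.mpr htlt.le)
    exact div_neg_of_neg_of_pos (hN_neg (x t) hxt (hupper t (mem_Iic.mpr htlt.le)))
      (by positivity)
  -- Part 3: lower bound
  have hlow : ∀ t ≤ that, b / (2 * a) ≤ x t := by
    intro t ht
    rcases lt_or_eq_of_le ht with h' | rfl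
    · rw [← hxT]; exact (hanti (mem_Iic.mpr h'.le) (mem_Iic.mpr le_rfl) h').le
    · exact le_of_eq hxT.symm
  -- Part 4: the limit
  set y : ℝ → ℝ := fun t => x (min t that) with hy_def
  have hy_anti : Antitone y := by
    intro u v huv
    rcases eq_or_lt_of_le (min_le_min huv (le_refl that)) with h' | h'
    · simp only [hy_def]; rw [h']
    · exact (hanti (mem_Iic.mpr (min_le_right u that))
        (mem_Iic.mpr (min_le_right v that)) h').le
  have hy_bdd : BddAbove (Set.range y) := by
    refine ⟨xbar, ?_⟩
    rintro _ ⟨t, rfl⟩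
    exact (hupper _ (min_le_right t that)).le
  have hylim := tendsto_atBot_ciSup hy_anti hy_bdd
  set L : ℝ := ⨆ t, y t with hL_def
  have hxy : x =ᶠ[atBot] y := by
    filter_upwards [eventually_le_atBot that] with t ht
    simp [hy_def, min_eq_left ht]
  have hxlim : Tendsto x atBot (nhds L) := hylim.congr' hxy.symm
  have hLle : L ≤ xbar := ciSup_le fun t => (hupper _ (min_le_right t that)).le
  have hLge : ∀ t ≤ that, x t ≤ L := by
    intro t ht
    have := le_ciSup hy_bdd t
    simpa [hy_def, min_eq_left ht] using this
  have hL_pos : 0 < L := lt_of_lt_of_le (hx_pos that (mem_Iic.mpr le_rfl)) (hLge that le_rfl)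
  clear_value L
  have hLeq : L = xbar := by
    rcases lt_or_eq_of_le hLle with hLlt | h
    · exfalso
      set δ : ℝ := a * b * (xbar - L) / (c * L) with hδ_def
      have hδ : 0 < δ :=
        div_pos (mul_pos (mul_pos ha hb) (sub_pos.mpr hLlt)) (mul_pos hc hL_pos)
      -- derivative bound
      have hderiv_le : ∀ t ∈ Iio that,
          (a * c * (x t) ^ 2 + b * (2 * a - c) * x t - b ^ 2) / (c * x t) ≤ -δ := by
        intro t ht
        have htlt : t < that := mem_Iio.mp ht
        have hxt : 0 < x t := hx_pos t (mem_Iic.mpr htlt.le)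
        have hxtL : x t ≤ L := hLge t htlt.le
        have hNle : a * c * (x t) ^ 2 + b * (2 * a - c) * x t - b ^ 2
            ≤ (L - xbar) * (a * b) := by
          rw [hfac (x t)]
          have hPt := hP (x t) hxt.le
          nlinarith [mul_pos ha hb]
        have hd1 : (a * c * (x t) ^ 2 + b * (2 * a - c) * x t - b ^ 2) / (c * x t)
            ≤ ((L - xbar) * (a * b)) / (c * x t) :=
          (div_le_div_iff_of_pos_right (mul_pos hc hxt)).mpr hNle
        have hML : ((L - xbar) * (a * b)) / (c * x t) ≤ ((L - xbar) * (a * b)) / (c * L) := by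
          rw [div_le_div_iff₀ (mul_pos hc hxt) (mul_pos hc hL_pos)]
          nlinarith [mul_nonneg (mul_nonneg (sub_nonneg.mpr hLlt.le) (mul_pos ha hb).le)
            (mul_nonneg hc.le (sub_nonneg.mpr hxtL))]
        have heq : ((L - xbar) * (a * b)) / (c * L) = -δ := by
          have hcL : c * L ≠ 0 := (mul_pos hc hL_pos).ne'
          rw [hδ_def]
          field_simp
          ring
        rw [heq] at hML
        linarith
      have hanti2 : AntitoneOn (fun t => x t + δ * t) (Set.Iic that) := by
        apply antitoneOn_of_deriv_nonpos (convex_Iic that)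
        · exact (hcont.add (continuousOn_const.mul continuousOn_id))
        · intro t ht
          rw [interior_Iic] at ht
          have htlt : t < that := mem_Iio.mp ht
          have hxd : HasDerivAt x
              ((a * c * (x t) ^ 2 + b * (2 * a - c) * x t - b ^ 2) / (c * x t)) t :=
            (hx t (mem_Iic.mpr htlt.le)).hasDerivAt (Iic_mem_nhds htlt)
          exact (hxd.add ((hasDerivAt_id t).const_mul δ)).differentiableAt.differentiableWithinAt
        · intro t ht
          rw [interior_Iic] at ht
          have htlt : t < that := mem_Iio.mp ht
          have hxd : HasDerivAt x
              ((a * c * (x t) ^ 2 + b * (2 * a - c) * x t - b ^ 2) / (c * x t)) t :=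
            (hx t (mem_Iic.mpr htlt.le)).hasDerivAt (Iic_mem_nhds htlt)
          have hd : HasDerivAt (fun t => x t + δ * t)
              ((a * c * (x t) ^ 2 + b * (2 * a - c) * x t - b ^ 2) / (c * x t) + δ * 1) t :=
            hxd.add ((hasDerivAt_id t).const_mul δ)
          rw [hd.deriv]
          have := hderiv_le t ht
          linarith
      -- choose a point far in the past
      obtain ⟨t₁, ht₁le, ht₁eq⟩ :
          ∃ t₁, t₁ ≤ that ∧ δ * (that - t₁) = L + 1 - x that := by
        refine ⟨that - (L + 1 - x that) / δ, ?_, ?_⟩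
        · have hnum : 0 ≤ L + 1 - x that := by
            have := hLge that le_rfl; linarith
          have h0 : 0 ≤ (L + 1 - x that) / δ := div_nonneg hnum hδ.le
          linarith
        · field_simp
          ring
      have hmono : x that + δ * that ≤ x t₁ + δ * t₁ :=
        hanti2 (mem_Iic.2 ht₁le) (mem_Iic.2 le_rfl) ht₁le
      have hexpand : δ * that - δ * t₁ = δ * (that - t₁) := by ring
      have hle := hLge t₁ ht₁le
      linarith
    · exact h
  rw [hLeq] at hxlim
  exact ⟨fun t ht => ⟨hlow t ht, hupper t ht⟩, hanti, hxlim⟩
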